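/- Let S be an additively divisible semiring (commutative) possessing a multiplicative identity 1. Then either S is additively idempotent, or S contains a copy of the parasemifield ℚ⁺ of positive rationals sharing the unit: there exists an injective map f from the positive rational numbers into S satisfying f(p+q) = f(p) + f(q), f(p·q) = f(p)·f(q) for all positive rationals p, q, and f(1) = 1. -/
import Mathlib

/-- `nmul n a` is the `n`-fold sum `a + ⋯ + a` (for `n ≥ 1`; `nmul 0 a = a` is junk). -/
def nmul {S : Type*} [Add S] (n : ℕ) (a : S) : S :=
  Nat.rec a (fun _ b => b + a) (n - 1)

set_option linter.unusedSectionVars false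

section aux
variable {S : Type*} [AddCommSemigroup S] [CommMonoid S]

theorem nmul_one'' (a : S) : nmul 1 a = a := rfl

theorem nmul_succ' : ∀ n : ℕ, 1 ≤ n → ∀ a : S, nmul (n + 1) a = nmul n a + a
  | _ + 1, _, _ => rfl

theorem nmul_add_nat' (m : ℕ) (hm : 1 ≤ m) :
    ∀ n : ℕ, 1 ≤ n → ∀ a : S, nmul (m + n) a = nmul m a + nmul n a := by
  intro n
  induction n with
  | zero => intro hn a; exact absurd hn (by omega)
  | succ n ih =>
    intro _ a
    rcases Nat.eq_zero_or_pos n with h | h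
    · subst h; rw [nmul_succ' m hm a, nmul_one'']
    · rw [show m + (n + 1) = (m + n) + 1 from by omega,
        nmul_succ' (m + n) (by omega) a, ih h a, nmul_succ' n h a, add_assoc]

theorem nmul_mul_nat' (n : ℕ) (hn : 1 ≤ n) :
    ∀ m : ℕ, 1 ≤ m → ∀ a : S, nmul (m * n) a = nmul m (nmul n a) := by
  intro m
  induction m with
  | zero => intro hm a; exact absurd hm (by omega)
  | succ m ih =>
    intro _ a
    rcases Nat.eq_zero_or_pos m with h | h
    · subst h
      rw [show (0 + 1) * n = n from by omega]
      exact rfl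
    · rw [show (m + 1) * n = m * n + n from by ring,
        nmul_add_nat' (m * n) (Nat.mul_pos h hn) n hn a, ih h a,
        nmul_succ' m h (nmul n a)]

theorem mul_nmul' (hdl : ∀ a b c : S, a * (b + c) = a * b + a * c) :
    ∀ n : ℕ, 1 ≤ n → ∀ a b : S, a * nmul n b = nmul n (a * b) := by
  intro n
  induction n with
  | zero => intro hn a b; exact absurd hn (by omega)
  | succ n ih =>
    intro _ a b
    rcases Nat.eq_zero_or_pos n with h | h
    · subst h; rw [nmul_one'', nmul_one'']
    · rw [nmul_succ' n h b, hdl, ih h a b, nmul_succ' n h (a * b)]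

theorem nmul_mul' (hdl : ∀ a b c : S, a * (b + c) = a * b + a * c)
    (n : ℕ) (hn : 1 ≤ n) (a b : S) : nmul n a * b = nmul n (a * b) := by
  rw [mul_comm, mul_nmul' hdl n hn b a, mul_comm b a]

theorem nmul_mul_nmul' (hdl : ∀ a b c : S, a * (b + c) = a * b + a * c)
    (m n : ℕ) (hm : 1 ≤ m) (hn : 1 ≤ n) (a b : S) :
    nmul m a * nmul n b = nmul (m * n) (a * b) := by
  rw [nmul_mul' hdl m hm a (nmul n b), mul_nmul' hdl n hn a b,
    ← nmul_mul_nat' n hn m hm (a * b)]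

end aux

theorem ratM' (q : ℚ) (hq : 0 < q) : ((q.num.toNat : ℚ)) = q * q.den := by
  have h0 : (0:ℤ) ≤ q.num := le_of_lt (Rat.num_pos.mpr hq)
  have h1 : (q.num.toNat : ℚ) = ((q.num : ℤ) : ℚ) := by exact_mod_cast Int.toNat_of_nonneg h0
  rw [h1, ← Rat.mul_den_eq_num]

theorem stmt_12 {S : Type*} [AddCommSemigroup S] [CommMonoid S]
    (hdl : ∀ a b c : S, a * (b + c) = a * b + a * c)
    (hdr : ∀ a b c : S, (a + b) * c = a * c + b * c)
    (hdiv : ∀ a : S, ∀ n : ℕ, 1 ≤ n → ∃ b : S, nmul n b = a) :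
    (∀ a : S, a + a = a) ∨
    (∃ f : {q : ℚ // 0 < q} → S, Function.Injective f ∧
      (∀ p q : {q : ℚ // 0 < q}, f ⟨p.1 + q.1, add_pos p.2 q.2⟩ = f p + f q) ∧
      (∀ p q : {q : ℚ // 0 < q}, f ⟨p.1 * q.1, mul_pos p.2 q.2⟩ = f p * f q) ∧
      f ⟨1, one_pos⟩ = 1) := by
  classical
  by_cases hid : ∀ a : S, a + a = a
  · exact Or.inl hid
  · right
    -- the "division of 1" elements
    set u : ℕ → S := fun n => (hdiv 1 (n + 1) (by omega)).choose with hu_def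
    have hu : ∀ n : ℕ, nmul (n + 1) (u n) = 1 := fun n => (hdiv 1 (n + 1) (by omega)).choose_spec
    have uu : ∀ n : ℕ, 1 ≤ n → nmul n (u (n - 1)) = 1 := by
      intro n hn
      have := hu (n - 1)
      rwa [Nat.sub_add_cancel hn] at this
    -- uniqueness of division of 1
    have uniq : ∀ n : ℕ, 1 ≤ n → ∀ b b' : S, nmul n b = 1 → nmul n b' = 1 → b = b' := by
      intro n hn b b' hb hb'
      calc b = b * 1 := (mul_one b).symm
        _ = b * nmul n b' := by rw [hb']
        _ = nmul n (b * b') := mul_nmul' hdl n hn b b'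
        _ = nmul n b * b' := (nmul_mul' hdl n hn b b').symm
        _ = 1 * b' := by rw [hb]
        _ = b' := one_mul b'
    -- well-definedness engine
    have engine : ∀ m n m' n' : ℕ, 1 ≤ m → 1 ≤ n → 1 ≤ m' → 1 ≤ n' → m * n' = m' * n →
        nmul m (u (n - 1)) = nmul m' (u (n' - 1)) := by
      intro m n m' n' hm hn hm' hn' hcond
      set W : S := u (n * n' - 1) with hW_def
      have hW : nmul (n * n') W = 1 := uu (n * n') (Nat.mul_pos hn hn')
      have h1 : nmul n' W = u (n - 1) := by
        refine uniq n hn _ _ ?_ (uu n hn)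
        rw [← nmul_mul_nat' n' hn' n hn W, hW]
      have h2 : nmul n W = u (n' - 1) := by
        refine uniq n' hn' _ _ ?_ (uu n' hn')
        rw [← nmul_mul_nat' n hn n' hn' W, Nat.mul_comm n' n, hW]
      calc nmul m (u (n - 1)) = nmul m (nmul n' W) := by rw [h1]
        _ = nmul (m * n') W := (nmul_mul_nat' n' hn' m hm W).symm
        _ = nmul (m' * n) W := by rw [hcond]
        _ = nmul m' (nmul n W) := nmul_mul_nat' n hn m' hm' W
        _ = nmul m' (u (n' - 1)) := by rw [h2]
    -- product of the u's
    have uprod : ∀ n n' : ℕ, 1 ≤ n → 1 ≤ n' → u (n - 1) * u (n' - 1) = u (n * n' - 1) := by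
      intro n n' hn hn'
      refine uniq (n * n') (Nat.mul_pos hn hn') _ _ ?_ (uu _ (Nat.mul_pos hn hn'))
      rw [← nmul_mul_nmul' hdl n n' hn hn' (u (n-1)) (u (n'-1)), uu n hn, uu n' hn', one_mul]
    -- numerator/denominator abbreviations
    have Mpos : ∀ p : {q : ℚ // 0 < q}, 1 ≤ p.1.num.toNat := by
      intro p
      have := Rat.num_pos.mpr p.2
      omega
    have Npos : ∀ p : {q : ℚ // 0 < q}, 1 ≤ p.1.den := fun p => p.1.den_pos
    set f : {q : ℚ // 0 < q} → S := fun p => nmul p.1.num.toNat (u (p.1.den - 1)) with hf_def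
    refine ⟨f, ?_, ?_, ?_, ?_⟩
    · -- injectivity
      intro p q hfeq
      by_contra hne
      -- rewrite over the common denominator
      have hfp : f p = nmul (p.1.num.toNat * q.1.den) (u (p.1.den * q.1.den - 1)) :=
        engine _ _ _ _ (Mpos p) (Npos p) (Nat.mul_pos (Mpos p) (Npos q))
          (Nat.mul_pos (Npos p) (Npos q)) (by ring)
      have hfq : f q = nmul (q.1.num.toNat * p.1.den) (u (p.1.den * q.1.den - 1)) :=
        engine _ _ _ _ (Mpos q) (Npos q) (Nat.mul_pos (Mpos q) (Npos p))
          (Nat.mul_pos (Npos p) (Npos q)) (by ring)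
      set A := p.1.num.toNat * q.1.den with hA_def
      set B := q.1.num.toNat * p.1.den with hB_def
      set N := p.1.den * q.1.den with hN_def
      have hApos : 1 ≤ A := Nat.mul_pos (Mpos p) (Npos q)
      have hBpos : 1 ≤ B := Nat.mul_pos (Mpos q) (Npos p)
      have hNpos : 1 ≤ N := Nat.mul_pos (Npos p) (Npos q)
      have hAW : nmul A (u (N - 1)) = nmul B (u (N - 1)) := by
        rw [← hfp, ← hfq]; exact hfeq
      have hAB : A ≠ B := by
        intro h
        apply hne
        apply Subtype.ext
        have hc : ((A : ℚ)) = (B : ℚ) := by exact_mod_cast h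
        rw [hA_def, hB_def] at hc
        push_cast at hc
        rw [ratM' p.1 p.2, ratM' q.1 q.2] at hc
        have hdp : ((p.1.den : ℚ)) ≠ 0 := by
          have := Npos p; positivity
        have hdq : ((q.1.den : ℚ)) ≠ 0 := by
          have := Npos q; positivity
        have hcc : p.1 * ((p.1.den : ℚ) * q.1.den) = q.1 * ((p.1.den : ℚ) * q.1.den) := by
          linear_combination hc
        exact mul_right_cancel₀ (mul_ne_zero hdp hdq) hcc
      -- multiply by nmul N 1 to clear denominators: nmul A 1 = nmul B 1
      have hclear : ∀ C : ℕ, 1 ≤ C → nmul N (1:S) * nmul C (u (N - 1)) = nmul C (1:S) := by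
        intro C hC
        rw [nmul_mul_nmul' hdl N C hNpos hC 1 (u (N-1)), one_mul, Nat.mul_comm N C,
          nmul_mul_nat' N hNpos C hC (u (N-1)), uu N hNpos]
      have hone : nmul A (1:S) = nmul B (1:S) := by
        rw [← hclear A hApos, ← hclear B hBpos, hAW]
      -- key collapse lemma
      have collapse : ∀ A B : ℕ, 1 ≤ A → A < B → nmul A (1:S) = nmul B (1:S) →
          ∀ a : S, a + a = a := by
        intro A B hA hAB hEq
        set k := B - A with hk_def
        have hk : 1 ≤ k := by omega
        have h0 : nmul A (1:S) = nmul A (1:S) + nmul k (1:S) := by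
          conv_lhs => rw [hEq, show B = A + k from by omega, nmul_add_nat' A hA k hk 1]
        have hj : ∀ j : ℕ, nmul A (1:S) = nmul A (1:S) + nmul ((j + 1) * k) (1:S) := by
          intro j
          induction j with
          | zero => rw [show (0 + 1) * k = k from by omega]; exact h0
          | succ j ih =>
            calc nmul A (1:S) = nmul A 1 + nmul ((j+1)*k) 1 := ih
              _ = (nmul A 1 + nmul k 1) + nmul ((j+1)*k) 1 := by rw [← h0]
              _ = nmul A 1 + (nmul k 1 + nmul ((j+1)*k) 1) := add_assoc _ _ _
              _ = nmul A 1 + nmul (k + (j+1)*k) 1 :=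
                  by rw [nmul_add_nat' k hk ((j+1)*k) (Nat.mul_pos (by omega) hk) 1]
              _ = nmul A 1 + nmul ((j+1+1)*k) 1 := by rw [show k + (j+1)*k = (j+1+1)*k from by ring]
        have hA' : nmul A (1:S) = nmul (A * (1 + k)) (1:S) := by
          have := hj (A - 1)
          rw [show (A - 1 + 1) * k = A * k from by rw [Nat.sub_add_cancel hA]] at this
          rw [this, ← nmul_add_nat' A hA (A * k) (Nat.mul_pos hA hk) 1,
            show A + A * k = A * (1 + k) from by ring]
        have h2 : ∀ x : S, nmul (1 + k) x = x := by
          intro x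
          obtain ⟨c, hc⟩ := hdiv x A hA
          calc nmul (1 + k) x = nmul (1 + k) (nmul A c) := by rw [hc]
            _ = nmul ((1 + k) * A) c := (nmul_mul_nat' A hA (1 + k) (by omega) c).symm
            _ = nmul (A * (1 + k)) c := by rw [Nat.mul_comm]
            _ = nmul (A * (1 + k)) ((1:S) * c) := by rw [one_mul]
            _ = nmul (A * (1 + k)) (1:S) * c :=
                (nmul_mul' hdl _ (Nat.mul_pos hA (by omega)) 1 c).symm
            _ = nmul A (1:S) * c := by rw [← hA']
            _ = nmul A ((1:S) * c) := nmul_mul' hdl A hA 1 c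
            _ = nmul A c := by rw [one_mul]
            _ = x := hc
        have h3 : ∀ n : ℕ, 1 ≤ n → ∀ b : S, nmul (n + k) b = nmul n b := by
          intro n hn b
          obtain ⟨m, rfl⟩ : ∃ m, n = m + 1 := ⟨n - 1, by omega⟩
          rcases Nat.eq_zero_or_pos m with h | h
          · subst h
            rw [show 0 + 1 + k = 1 + k from by omega, h2 b]
            exact rfl
          · rw [show m + 1 + k = m + (1 + k) from by omega,
              nmul_add_nat' m h (1 + k) (by omega) b, h2 b, nmul_succ' m h b]
        obtain ⟨w, hw⟩ := hdiv (1:S) (2 * k) (by omega)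
        have htw : nmul k w = 1 := by
          calc nmul k w = nmul (k + k) w := (h3 k hk w).symm
            _ = nmul (2 * k) w := by rw [two_mul]
            _ = 1 := hw
        have h11 : (1:S) + 1 = 1 := by
          calc (1:S) + 1 = nmul 2 (1:S) := rfl
            _ = nmul 2 (nmul k w) := by rw [htw]
            _ = nmul (2 * k) w := (nmul_mul_nat' k hk 2 (by omega) w).symm
            _ = 1 := hw
        intro a
        calc a + a = a * 1 + a * 1 := by rw [mul_one]
          _ = a * (1 + 1) := (hdl a 1 1).symm
          _ = a * 1 := by rw [h11]
          _ = a := mul_one a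
      rcases Nat.lt_or_ge A B with h | h
      · exact hid (collapse A B hApos h hone)
      · have h' : B < A := by omega
        exact hid (collapse B A hBpos h' hone.symm)
    · -- additivity
      intro p q
      set r : {q : ℚ // 0 < q} := ⟨p.1 + q.1, add_pos p.2 q.2⟩ with hr_def
      have hfp : f p = nmul (p.1.num.toNat * q.1.den) (u (p.1.den * q.1.den - 1)) :=
        engine _ _ _ _ (Mpos p) (Npos p) (Nat.mul_pos (Mpos p) (Npos q))
          (Nat.mul_pos (Npos p) (Npos q)) (by ring)
      have hfq : f q = nmul (q.1.num.toNat * p.1.den) (u (p.1.den * q.1.den - 1)) :=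
        engine _ _ _ _ (Mpos q) (Npos q) (Nat.mul_pos (Mpos q) (Npos p))
          (Nat.mul_pos (Npos p) (Npos q)) (by ring)
      have key : r.1.num.toNat * (p.1.den * q.1.den) =
          (p.1.num.toNat * q.1.den + q.1.num.toNat * p.1.den) * r.1.den := by
        have hcast : ((r.1.num.toNat * (p.1.den * q.1.den) : ℕ) : ℚ) =
            (((p.1.num.toNat * q.1.den + q.1.num.toNat * p.1.den) * r.1.den : ℕ) : ℚ) := by
          push_cast
          rw [ratM' r.1 r.2, ratM' p.1 p.2, ratM' q.1 q.2,
            show (r.1 : ℚ) = p.1 + q.1 from rfl]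
          ring
        exact_mod_cast hcast
      have hfr : f r = nmul (p.1.num.toNat * q.1.den + q.1.num.toNat * p.1.den)
          (u (p.1.den * q.1.den - 1)) :=
        engine _ _ _ _ (Mpos r) (Npos r)
          (by have h1 := Nat.mul_pos (Mpos p) (Npos q); omega)
          (Nat.mul_pos (Npos p) (Npos q)) key
      rw [hfr, hfp, hfq,
        nmul_add_nat' _ (Nat.mul_pos (Mpos p) (Npos q)) _ (Nat.mul_pos (Mpos q) (Npos p))]
    · -- multiplicativity
      intro p q
      set r : {q : ℚ // 0 < q} := ⟨p.1 * q.1, mul_pos p.2 q.2⟩ with hr_def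
      have key : r.1.num.toNat * (p.1.den * q.1.den) =
          (p.1.num.toNat * q.1.num.toNat) * r.1.den := by
        have hcast : ((r.1.num.toNat * (p.1.den * q.1.den) : ℕ) : ℚ) =
            (((p.1.num.toNat * q.1.num.toNat) * r.1.den : ℕ) : ℚ) := by
          push_cast
          rw [ratM' r.1 r.2, ratM' p.1 p.2, ratM' q.1 q.2,
            show (r.1 : ℚ) = p.1 * q.1 from rfl]
          ring
        exact_mod_cast hcast
      have hfr : f r = nmul (p.1.num.toNat * q.1.num.toNat) (u (p.1.den * q.1.den - 1)) :=
        engine _ _ _ _ (Mpos r) (Npos r) (Nat.mul_pos (Mpos p) (Mpos q))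
          (Nat.mul_pos (Npos p) (Npos q)) key
      rw [hfr]
      show _ = nmul p.1.num.toNat (u (p.1.den - 1)) * nmul q.1.num.toNat (u (q.1.den - 1))
      rw [nmul_mul_nmul' hdl _ _ (Mpos p) (Mpos q), uprod _ _ (Npos p) (Npos q)]
    · -- unit
      show nmul ((1:ℚ).num.toNat) (u ((1:ℚ).den - 1)) = 1
      simpa using hu 0
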